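/- Let f,g,h,t≥1 be integers, let G be a (K_{2,2},K_t)-free graph, let Z⊆V(G) with |Z|≤h, and let Z0={z1,z2,z}⊆Z be a 3-clique such that the neighbors of z inside Z are exactly z1 and z2. Let p=(Z0,…,Z_f;Γ_i : i∈[f]) be a (Z0, f+g+2^h·t, f)-phantom in G such that Z_f∩Z=Z0. Then either (a) there exists a (z1,z2,1,g)-crystal c in the induced subgraph G[Z_f] such that V(c) is anticomplete to Z∖Z0, or (b) G has a subgraph (not necessarily induced) isomorphic to cone(cone(T_{f,f})). -/

import Mathlib

/-- `G` is `H`-free: no induced subgraph of `G` is isomorphic to `H`. -/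
def Free {V W : Type} (G : SimpleGraph V) (H : SimpleGraph W) : Prop :=
  IsEmpty (H ↪g G)

/-- A graph is chordal if it has no induced cycle on at least four vertices. -/
def Chordal {V : Type} (G : SimpleGraph V) : Prop :=
  ∀ n : ℕ, 4 ≤ n → IsEmpty (SimpleGraph.cycleGraph n ↪g G)

/-- A graph is even-hole-free if it has no induced cycle on an even number (at least four)
of vertices. -/
def EvenHoleFree {V : Type} (G : SimpleGraph V) : Prop :=
  ∀ n : ℕ, 4 ≤ n → Even n → IsEmpty (SimpleGraph.cycleGraph n ↪g G)

/-- `cone F` is obtained from `F` by adding a universal vertex (the vertex `none`). -/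
def cone {V : Type} (F : SimpleGraph V) : SimpleGraph (Option V) :=
  SimpleGraph.fromRel (fun u v => u = none ∨ ∃ a b, u = some a ∧ v = some b ∧ F.Adj a b)
/-- `(Z, Γ)` is a `(Z0, d, r)`-phantom in `G`:  `Z0 = Z 0 ⊆ Z 1 ⊆ ⋯ ⊆ Z r`, and for each
`i ∈ [r]` and each edge `uv` of `G[Z (i-1)]`, `Γ i s(u,v)` is a `d`-element subset of
`Z i \ Z (i-1)` complete to `{u, v}`, these sets being pairwise disjoint over distinct edges. -/
def IsPhantom {V : Type} (G : SimpleGraph V) (Z0 : Set V) (d r : ℕ)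
    (Z : ℕ → Set V) (Γ : ℕ → Sym2 V → Set V) : Prop :=
  Z 0 = Z0 ∧
  (∀ i, i < r → Z i ⊆ Z (i + 1)) ∧
  (∀ i, i < r → ∀ u v : V, G.Adj u v → u ∈ Z i → v ∈ Z i →
    (Γ (i + 1) s(u, v)).Finite ∧ (Γ (i + 1) s(u, v)).ncard = d ∧
    Γ (i + 1) s(u, v) ⊆ Z (i + 1) \ Z i ∧
    ∀ x ∈ Γ (i + 1) s(u, v), G.Adj u x ∧ G.Adj v x) ∧
  (∀ i, i < r → ∀ u v u' v' : V, G.Adj u v → u ∈ Z i → v ∈ Z i →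
    G.Adj u' v' → u' ∈ Z i → v' ∈ Z i → s(u, v) ≠ s(u', v') →
    Γ (i + 1) s(u, v) ∩ Γ (i + 1) s(u', v') = ∅)
/-- `(S, S1, S2)` is a `(z1, z2, f, g)`-crystal in `G`. -/
structure IsCrystalIn {V : Type} (G : SimpleGraph V) (z1 z2 : V) (f g : ℕ)
    (S : Finset V) (S1 S2 : V → Finset V) : Prop where
  adj : G.Adj z1 z2
  cardS : S.card = f
  z1_not_mem : z1 ∉ S
  z2_not_mem : z2 ∉ S
  card1 : ∀ z ∈ S, (S1 z).card = g
  card2 : ∀ z ∈ S, (S2 z).card = g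
  avoid1 : ∀ z ∈ S, ∀ x ∈ S1 z, x ∉ S ∧ x ≠ z1 ∧ x ≠ z2
  avoid2 : ∀ z ∈ S, ∀ x ∈ S2 z, x ∉ S ∧ x ≠ z1 ∧ x ≠ z2
  disj11 : ∀ z ∈ S, ∀ z' ∈ S, z ≠ z' → Disjoint (S1 z) (S1 z')
  disj22 : ∀ z ∈ S, ∀ z' ∈ S, z ≠ z' → Disjoint (S2 z) (S2 z')
  disj12 : ∀ z ∈ S, ∀ z' ∈ S, Disjoint (S1 z) (S2 z')
  adj1 : ∀ z ∈ S, ∀ x ∈ S1 z, G.Adj x z1 ∧ G.Adj x z ∧ ¬ G.Adj x z2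
  adj2 : ∀ z ∈ S, ∀ x ∈ S2 z, G.Adj x z2 ∧ G.Adj x z ∧ ¬ G.Adj x z1

/-- The vertex set `V(c)` of a crystal `(S, S1, S2)`. -/
def crystalVerts {V : Type} (S : Finset V) (S1 S2 : V → Finset V) : Set V :=
  ↑S ∪ (⋃ z ∈ S, (↑(S1 z) : Set V)) ∪ (⋃ z ∈ S, (↑(S2 z) : Set V))
/-- Vertices of the tree `T_{d,r}`: sequences over `Fin d` of length at most `r`. -/
abbrev TdrVert (d r : ℕ) : Type := {l : List (Fin d) // l.length ≤ r}

/-- The tree `T_{d,r}` of radius `r` whose root (the empty list) has degree `d` and in which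
every vertex that is neither the root nor a leaf has degree `d+1`. -/
def Tdr (d r : ℕ) : SimpleGraph (TdrVert d r) :=
  SimpleGraph.fromRel
    (fun u v => ∃ a : Fin d, (v : List (Fin d)) = a :: (u : List (Fin d)))

/-- Theorem: given a `(Z0, f+g+2^h·t, f)`-phantom on a suitable 3-clique `Z0 = {z1, z2, z}`
inside a set `Z` of size at most `h` in a `(K_{2,2}, K_t)`-free graph `G` with `Z_f ∩ Z = Z0`,
either there is a `(z1, z2, 1, g)`-crystal in `G[Z_f]` anticomplete to `Z \ Z0`, or `G` has a
subgraph isomorphic to `cone(cone(T_{f,f}))`. -/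
lemma k22_helper {V : Type} {G : SimpleGraph V}
    (hK22 : Free G (completeBipartiteGraph (Fin 2) (Fin 2)))
    {a b c d : V} (hab : a ≠ b) (hcd : c ≠ d)
    (hnab : ¬G.Adj a b) (hncd : ¬G.Adj c d)
    (hac : G.Adj a c) (had : G.Adj a d) (hbc : G.Adj b c) (hbd : G.Adj b d) : False := by
  apply hK22.false
  refine ⟨⟨Sum.elim ![a, b] ![c, d], ?_⟩, ?_⟩
  · rintro (x | x) (y | y) h <;>
      fin_cases x <;> fin_cases y <;> simp_all [Matrix.cons_val_zero, Matrix.cons_val_one]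
  · rintro (x | x) (y | y) <;> fin_cases x <;> fin_cases y <;>
      simp [completeBipartiteGraph, G.adj_comm] <;>
      first
        | exact hnab | exact hncd | exact hac | exact had | exact hbc | exact hbd


lemma clique_card_lt {V : Type} {G : SimpleGraph V} {t : ℕ}
    (hKt : Free G (⊤ : SimpleGraph (Fin t))) (P : Finset V)
    (hP : ∀ x ∈ P, ∀ y ∈ P, x ≠ y → G.Adj x y) : P.card ≤ t - 1 := by
  have hcf : G.CliqueFree t := by
    rw [SimpleGraph.cliqueFree_iff]; exact ⟨fun c => hKt.false c.topEmbedding⟩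
  by_contra hlt
  push_neg at hlt
  have ht : t ≤ P.card := by omega
  obtain ⟨Q, hQP, hQcard⟩ := Finset.exists_subset_card_eq ht
  exact hcf Q ⟨fun x hx y hy hxy => hP x (hQP hx) y (hQP hy) hxy, hQcard⟩


lemma sideLemma {V : Type} {G : SimpleGraph V} {t h : ℕ}
    (hK22 : Free G (completeBipartiteGraph (Fin 2) (Fin 2)))
    (hKt : Free G (⊤ : SimpleGraph (Fin t)))
    {Z : Set V} (hZfin : Z.Finite) (hZcard : Z.ncard ≤ h)
    {z1 z2 z : V}
    {ΓS : Set V} (hfin : ΓS.Finite)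
    {w : V} (hwy : ∀ y ∈ Z, y ≠ z1 → y ≠ z2 → y ≠ z → ¬ G.Adj w y)
    (hwZ : w = z ∨ w ∉ Z)
    (hadjΓ : ∀ x ∈ ΓS, G.Adj w x) :
    ∃ Bad : Finset V, ↑Bad ⊆ ΓS ∧ Bad.card ≤ 2 ^ h * t ∧
      ∀ x ∈ ΓS, x ∉ Bad → ∀ y ∈ Z, y ≠ z1 → y ≠ z2 → y ≠ z → ¬ G.Adj x y := by
  classical
  set Gf := hfin.toFinset with hGf
  set Bad := Gf.filter (fun x => ∃ y ∈ Z, y ≠ z1 ∧ y ≠ z2 ∧ y ≠ z ∧ G.Adj x y) with hBad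
  have hBadsub : Bad ⊆ Gf := Finset.filter_subset _ _
  refine ⟨Bad, ?_, ?_, ?_⟩
  · intro x hx
    have := hBadsub hx
    rwa [hGf, Set.Finite.mem_toFinset] at this
  · set Zfin' := hZfin.toFinset.filter (fun y => y ≠ z1 ∧ y ≠ z2 ∧ y ≠ z) with hZfin'
    have hBsub : Bad ⊆ Zfin'.biUnion (fun y => Gf.filter (fun x => G.Adj x y)) := by
      intro x hx
      rw [hBad, Finset.mem_filter] at hx
      obtain ⟨hxG, y, hyZ, hy1, hy2, hy3, hadj⟩ := hx
      rw [Finset.mem_biUnion]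
      exact ⟨y, by simp [hZfin', Set.Finite.mem_toFinset, hyZ, hy1, hy2, hy3],
        by simp [hxG, hadj]⟩
    have hpiece : ∀ y ∈ Zfin', (Gf.filter (fun x => G.Adj x y)).card ≤ t - 1 := by
      intro y hy
      rw [hZfin', Finset.mem_filter, Set.Finite.mem_toFinset] at hy
      obtain ⟨hyZ, hy1, hy2, hy3⟩ := hy
      apply clique_card_lt hKt
      intro x hx x' hx' hne
      rw [Finset.mem_filter, hGf, Set.Finite.mem_toFinset] at hx hx'
      by_contra hnadj
      have hwyne : w ≠ y := by
        rcases hwZ with rfl | hwZ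
        · exact fun hh => hy3 hh.symm
        · exact fun hh => hwZ (hh ▸ hyZ)
      exact k22_helper hK22 hwyne hne (hwy y hyZ hy1 hy2 hy3) hnadj
        (hadjΓ x hx.1) (hadjΓ x' hx'.1) hx.2.symm hx'.2.symm
    calc Bad.card ≤ (Zfin'.biUnion (fun y => Gf.filter (fun x => G.Adj x y))).card :=
          Finset.card_le_card hBsub
      _ ≤ ∑ y ∈ Zfin', (Gf.filter (fun x => G.Adj x y)).card := Finset.card_biUnion_le
      _ ≤ Zfin'.card * (t - 1) := by
          have := Finset.sum_le_card_nsmul Zfin' _ (t-1) hpiece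
          simpa [smul_eq_mul] using this
      _ ≤ 2 ^ h * t := by
          have h1 : Zfin'.card ≤ h := by
            have : Zfin'.card ≤ hZfin.toFinset.card := Finset.card_le_card (Finset.filter_subset _ _)
            rw [← Set.ncard_eq_toFinset_card _ hZfin] at this
            omega
          have h2 : h ≤ 2 ^ h := (Nat.lt_two_pow_self (n := h)).le
          calc Zfin'.card * (t-1) ≤ h * t := Nat.mul_le_mul h1 (Nat.sub_le t 1)
            _ ≤ 2 ^ h * t := Nat.mul_le_mul_right t h2
  · intro x hxΓ hxB y hyZ hy1 hy2 hy3 hadj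
    apply hxB
    rw [hBad, Finset.mem_filter]
    exact ⟨by rwa [hGf, Set.Finite.mem_toFinset], y, hyZ, hy1, hy2, hy3, hadj⟩

abbrev GoodAux {V : Type} (G : SimpleGraph V) (Z : Set V) (Zs : ℕ → Set V)
    (z1 z2 z : V) (i : ℕ) (w : V) : Prop :=
  w ∈ Zs i ∧ w ≠ z1 ∧ w ≠ z2 ∧ G.Adj z1 w ∧ G.Adj z2 w ∧
    (∀ y ∈ Z, y ≠ z1 → y ≠ z2 → y ≠ z → ¬ G.Adj w y) ∧ (w = z ∨ w ∉ Z)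


def philAux {V : Type} {f : ℕ} (z : V) (cf : ℕ → V → Fin f → V) : List (Fin f) → V
  | [] => z
  | a :: m => cf m.length (philAux z cf m) a


theorem stmt6 (f g h t : ℕ) (hf : 1 ≤ f) (hg : 1 ≤ g) (hh : 1 ≤ h) (ht : 1 ≤ t)
    {V : Type} (G : SimpleGraph V)
    (hK22 : Free G (completeBipartiteGraph (Fin 2) (Fin 2)))
    (hKt : Free G (⊤ : SimpleGraph (Fin t)))
    (Z : Set V) (hZfin : Z.Finite) (hZcard : Z.ncard ≤ h)
    (z1 z2 z : V) (hZ0sub : {z1, z2, z} ⊆ Z)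
    (hZ0clique : G.IsClique {z1, z2, z}) (hZ0card : ({z1, z2, z} : Set V).ncard = 3)
    (hNz : ∀ y ∈ Z, G.Adj z y ↔ y = z1 ∨ y = z2)
    (Zs : ℕ → Set V) (Γ : ℕ → Sym2 V → Set V)
    (hp : IsPhantom G {z1, z2, z} (f + g + 2 ^ h * t) f Zs Γ)
    (hcap : Zs f ∩ Z = {z1, z2, z}) :
    (∃ (S : Finset V) (S1 S2 : V → Finset V),
      IsCrystalIn G z1 z2 1 g S S1 S2 ∧ crystalVerts S S1 S2 ⊆ Zs f ∧
      ∀ u ∈ crystalVerts S S1 S2, ∀ v ∈ Z \ {z1, z2, z}, ¬ G.Adj u v) ∨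
    (∃ φ : cone (cone (Tdr f f)) →g G, Function.Injective φ) := by
  classical
  obtain ⟨hZ00, hZmono, hΓm, hΓdisj⟩ := hp
  -- distinctness of z1 z2 z
  have hdup : ∀ (x y : V) (s : Set V), s ⊆ {x, y} → s.ncard ≤ 2 := by
    intro x y s hs
    refine le_trans (Set.ncard_le_ncard hs ((Set.finite_singleton y).insert x)) ?_
    refine le_trans (Set.ncard_insert_le _ _) ?_
    simp [Set.ncard_singleton]
  have h12 : z1 ≠ z2 := by
    rintro rfl
    have := hdup z1 z ({z1, z1, z} : Set V) (by intro u hu; simp at hu ⊢; tauto)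
    omega
  have h1z : z1 ≠ z := by
    rintro rfl
    have := hdup z1 z2 ({z1, z2, z1} : Set V) (by intro u hu; simp at hu ⊢; tauto)
    omega
  have h2z : z2 ≠ z := by
    rintro rfl
    have := hdup z1 z2 ({z1, z2, z2} : Set V) (by intro u hu; simp at hu ⊢; tauto)
    omega
  have hadj12 : G.Adj z1 z2 := hZ0clique (by simp) (by simp) h12
  have hadj1z : G.Adj z1 z := hZ0clique (by simp) (by simp) h1z
  have hadj2z : G.Adj z2 z := hZ0clique (by simp) (by simp) h2z
  have hz1Z0 : z1 ∈ Zs 0 := by rw [hZ00]; simp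
  have hz2Z0 : z2 ∈ Zs 0 := by rw [hZ00]; simp
  have hzZ0 : z ∈ Zs 0 := by rw [hZ00]; simp
  have hmono : ∀ i j, i ≤ j → j ≤ f → Zs i ⊆ Zs j := by
    intro i j hij hjf
    induction j with
    | zero => obtain rfl : i = 0 := Nat.le_zero.mp hij; exact subset_rfl
    | succ j ihj =>
      rcases Nat.lt_or_ge i (j + 1) with hlt | hge
      · exact (ihj (by omega) (by omega)).trans (hZmono j (by omega))
      · obtain rfl : i = j + 1 := by omega
        exact subset_rfl
  set Good := GoodAux G Z Zs z1 z2 z with hGood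
  by_cases hcrys : (∃ (S : Finset V) (S1 S2 : V → Finset V),
      IsCrystalIn G z1 z2 1 g S S1 S2 ∧ crystalVerts S S1 S2 ⊆ Zs f ∧
      ∀ u ∈ crystalVerts S S1 S2, ∀ v ∈ Z \ {z1, z2, z}, ¬ G.Adj u v)
  · exact Or.inl hcrys
  right
  -- key step lemma
  have hkey : ∀ i, i < f → ∀ w, Good i w → ∃ (a : V) (C : Finset V),
      (a = z1 ∨ a = z2) ∧ (↑C : Set V) ⊆ Γ (i + 1) s(a, w) ∧ C.card = f ∧
      ∀ x ∈ C, Good (i + 1) x ∧ G.Adj w x := by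
    intro i hi w hGw
    obtain ⟨hwZi, hwz1, hwz2, h1w, h2w, hwanti, hwzZ⟩ := hGw
    have hz1i : z1 ∈ Zs i := hmono 0 i (Nat.zero_le _) hi.le hz1Z0
    have hz2i : z2 ∈ Zs i := hmono 0 i (Nat.zero_le _) hi.le hz2Z0
    have hzi : z ∈ Zs i := hmono 0 i (Nat.zero_le _) hi.le hzZ0
    obtain ⟨hfin1, hcard1, hsub1, hadj1⟩ := hΓm i hi z1 w h1w hz1i hwZi
    obtain ⟨hfin2, hcard2, hsub2, hadj2⟩ := hΓm i hi z2 w h2w hz2i hwZi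
    obtain ⟨Bad1, hB1sub, hB1card, hB1good⟩ :=
      sideLemma hK22 hKt hZfin hZcard hfin1 hwanti hwzZ (fun x hx => (hadj1 x hx).2)
    obtain ⟨Bad2, hB2sub, hB2card, hB2good⟩ :=
      sideLemma hK22 hKt hZfin hZcard hfin2 hwanti hwzZ (fun x hx => (hadj2 x hx).2)
    set Gf1 := hfin1.toFinset with hGf1
    set Gf2 := hfin2.toFinset with hGf2
    have hGf1card : Gf1.card = f + g + 2 ^ h * t :=
      (Set.ncard_eq_toFinset_card _ hfin1).symm.trans hcard1
    have hGf2card : Gf2.card = f + g + 2 ^ h * t :=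
      (Set.ncard_eq_toFinset_card _ hfin2).symm.trans hcard2
    set Gd1 := Gf1 \ Bad1 with hGd1
    set Gd2 := Gf2 \ Bad2 with hGd2
    have hB1sub' : Bad1 ⊆ Gf1 := fun x hx => (Set.Finite.mem_toFinset hfin1).mpr (hB1sub hx)
    have hB2sub' : Bad2 ⊆ Gf2 := fun x hx => (Set.Finite.mem_toFinset hfin2).mpr (hB2sub hx)
    have hGd1card : f + g ≤ Gd1.card := by
      rw [hGd1, Finset.card_sdiff_of_subset hB1sub']
      omega
    have hGd2card : f + g ≤ Gd2.card := by
      rw [hGd2, Finset.card_sdiff_of_subset hB2sub']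
      omega
    have hGd1p : ∀ x ∈ Gd1, x ∈ Γ (i + 1) s(z1, w) ∧ x ∈ Zs (i + 1) ∧ x ∉ Zs i ∧
        x ≠ z1 ∧ x ≠ z2 ∧ x ≠ w ∧ x ∉ Z ∧ G.Adj z1 x ∧ G.Adj w x ∧
        (∀ y ∈ Z, y ≠ z1 → y ≠ z2 → y ≠ z → ¬G.Adj x y) := by
      intro x hx
      rw [hGd1, Finset.mem_sdiff] at hx
      obtain ⟨hxG, hxB⟩ := hx
      have hxΓ : x ∈ Γ (i + 1) s(z1, w) := (Set.Finite.mem_toFinset hfin1).mp hxG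
      have hxZ := hsub1 hxΓ
      have hxnZ : x ∉ Z := by
        intro hxZmem
        have hxZf : x ∈ Zs f := hmono (i + 1) f hi le_rfl hxZ.1
        have hmem3 : x ∈ ({z1, z2, z} : Set V) := by rw [← hcap]; exact ⟨hxZf, hxZmem⟩
        simp only [Set.mem_insert_iff, Set.mem_singleton_iff] at hmem3
        rcases hmem3 with rfl | rfl | rfl
        · exact hxZ.2 hz1i
        · exact hxZ.2 hz2i
        · exact hxZ.2 hzi
      exact ⟨hxΓ, hxZ.1, hxZ.2, fun hh => hxZ.2 (hh ▸ hz1i), fun hh => hxZ.2 (hh ▸ hz2i),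
        fun hh => hxZ.2 (hh ▸ hwZi), hxnZ, (hadj1 x hxΓ).1, (hadj1 x hxΓ).2,
        hB1good x hxΓ hxB⟩
    have hGd2p : ∀ x ∈ Gd2, x ∈ Γ (i + 1) s(z2, w) ∧ x ∈ Zs (i + 1) ∧ x ∉ Zs i ∧
        x ≠ z1 ∧ x ≠ z2 ∧ x ≠ w ∧ x ∉ Z ∧ G.Adj z2 x ∧ G.Adj w x ∧
        (∀ y ∈ Z, y ≠ z1 → y ≠ z2 → y ≠ z → ¬G.Adj x y) := by
      intro x hx
      rw [hGd2, Finset.mem_sdiff] at hx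
      obtain ⟨hxG, hxB⟩ := hx
      have hxΓ : x ∈ Γ (i + 1) s(z2, w) := (Set.Finite.mem_toFinset hfin2).mp hxG
      have hxZ := hsub2 hxΓ
      have hxnZ : x ∉ Z := by
        intro hxZmem
        have hxZf : x ∈ Zs f := hmono (i + 1) f hi le_rfl hxZ.1
        have hmem3 : x ∈ ({z1, z2, z} : Set V) := by rw [← hcap]; exact ⟨hxZf, hxZmem⟩
        simp only [Set.mem_insert_iff, Set.mem_singleton_iff] at hmem3
        rcases hmem3 with rfl | rfl | rfl
        · exact hxZ.2 hz1i
        · exact hxZ.2 hz2i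
        · exact hxZ.2 hzi
      exact ⟨hxΓ, hxZ.1, hxZ.2, fun hh => hxZ.2 (hh ▸ hz1i), fun hh => hxZ.2 (hh ▸ hz2i),
        fun hh => hxZ.2 (hh ▸ hwZi), hxnZ, (hadj2 x hxΓ).1, (hadj2 x hxΓ).2,
        hB2good x hxΓ hxB⟩
    set C1 := Gd1.filter (fun x => ¬ G.Adj x z2) with hC1
    set C2 := Gd2.filter (fun x => ¬ G.Adj x z1) with hC2
    set D1 := Gd1.filter (fun x => G.Adj x z2) with hD1
    set D2 := Gd2.filter (fun x => G.Adj x z1) with hD2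
    have hsplit1 : D1.card + C1.card = Gd1.card :=
      Finset.card_filter_add_card_filter_not (fun x => G.Adj x z2)
    have hsplit2 : D2.card + C2.card = Gd2.card :=
      Finset.card_filter_add_card_filter_not (fun x => G.Adj x z1)
    by_cases hgg : g ≤ C1.card ∧ g ≤ C2.card
    · exfalso
      apply hcrys
      obtain ⟨T1, hT1sub, hT1card⟩ := Finset.exists_subset_card_eq hgg.1
      obtain ⟨T2, hT2sub, hT2card⟩ := Finset.exists_subset_card_eq hgg.2
      have hT1p : ∀ x ∈ T1, (x ∈ Γ (i + 1) s(z1, w) ∧ x ∈ Zs (i + 1) ∧ x ∉ Zs i ∧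
          x ≠ z1 ∧ x ≠ z2 ∧ x ≠ w ∧ x ∉ Z ∧ G.Adj z1 x ∧ G.Adj w x ∧
          (∀ y ∈ Z, y ≠ z1 → y ≠ z2 → y ≠ z → ¬G.Adj x y)) ∧ ¬ G.Adj x z2 := by
        intro x hx
        have hx' := hT1sub hx
        rw [hC1, Finset.mem_filter] at hx'
        exact ⟨hGd1p x hx'.1, hx'.2⟩
      have hT2p : ∀ x ∈ T2, (x ∈ Γ (i + 1) s(z2, w) ∧ x ∈ Zs (i + 1) ∧ x ∉ Zs i ∧
          x ≠ z1 ∧ x ≠ z2 ∧ x ≠ w ∧ x ∉ Z ∧ G.Adj z2 x ∧ G.Adj w x ∧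
          (∀ y ∈ Z, y ≠ z1 → y ≠ z2 → y ≠ z → ¬G.Adj x y)) ∧ ¬ G.Adj x z1 := by
        intro x hx
        have hx' := hT2sub hx
        rw [hC2, Finset.mem_filter] at hx'
        exact ⟨hGd2p x hx'.1, hx'.2⟩
      have hneq12 : s(z1, w) ≠ s(z2, w) := by
        intro hcontra
        rw [Sym2.eq_iff] at hcontra
        rcases hcontra with ⟨h1', _⟩ | ⟨h1', _⟩
        · exact h12 h1'
        · exact hwz1 h1'.symm
      have hdisjT : Disjoint T1 T2 := by
        rw [Finset.disjoint_left]
        intro x hx1 hx2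
        have e1 := (hT1p x hx1).1.1
        have e2 := (hT2p x hx2).1.1
        have hΓd := hΓdisj i hi z1 w z2 w h1w hz1i hwZi h2w hz2i hwZi hneq12
        have : x ∈ (∅ : Set V) := by rw [← hΓd]; exact ⟨e1, e2⟩
        exact this
      refine ⟨{w}, fun _ => T1, fun _ => T2,
        ⟨hadj12, by simp, ?_, ?_, fun _ _ => hT1card, fun _ _ => hT2card, ?_, ?_,
          ?_, ?_, fun _ _ _ _ => hdisjT, ?_, ?_⟩, ?_, ?_⟩
      · simp only [Finset.mem_singleton]
        exact fun hh => hwz1 hh.symm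
      · simp only [Finset.mem_singleton]
        exact fun hh => hwz2 hh.symm
      · intro z' hz' x hx
        simp only [Finset.mem_singleton] at hz'
        subst hz'
        obtain ⟨⟨_, _, hxnZi, hx1, hx2, hxw, _⟩, _⟩ := hT1p x hx
        exact ⟨by simpa using hxw, hx1, hx2⟩
      · intro z' hz' x hx
        simp only [Finset.mem_singleton] at hz'
        subst hz'
        obtain ⟨⟨_, _, hxnZi, hx1, hx2, hxw, _⟩, _⟩ := hT2p x hx
        exact ⟨by simpa using hxw, hx1, hx2⟩
      · intro z' hz' z'' hz'' hne
        simp only [Finset.mem_singleton] at hz' hz''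
        exact absurd (hz'.trans hz''.symm) hne
      · intro z' hz' z'' hz'' hne
        simp only [Finset.mem_singleton] at hz' hz''
        exact absurd (hz'.trans hz''.symm) hne
      · intro z' hz' x hx
        simp only [Finset.mem_singleton] at hz'
        subst hz'
        obtain ⟨⟨_, _, _, _, _, _, _, ha1, haw, _⟩, hnot2⟩ := hT1p x hx
        exact ⟨ha1.symm, haw.symm, hnot2⟩
      · intro z' hz' x hx
        simp only [Finset.mem_singleton] at hz'
        subst hz'
        obtain ⟨⟨_, _, _, _, _, _, _, ha2, haw, _⟩, hnot1⟩ := hT2p x hx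
        exact ⟨ha2.symm, haw.symm, hnot1⟩
      · intro u hu
        simp only [crystalVerts, Finset.coe_singleton, Set.mem_union, Set.mem_singleton_iff,
          Set.mem_iUnion, Finset.mem_coe, Finset.mem_singleton, exists_prop] at hu
        rcases hu with (rfl | ⟨_, _, hu⟩) | ⟨_, _, hu⟩
        · exact hmono i f hi.le le_rfl hwZi
        · exact hmono (i + 1) f hi le_rfl (hT1p _ hu).1.2.1
        · exact hmono (i + 1) f hi le_rfl (hT2p _ hu).1.2.1
      · intro u hu v hv
        simp only [Set.mem_diff, Set.mem_insert_iff, Set.mem_singleton_iff, not_or] at hv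
        obtain ⟨hvZ, hv1, hv2, hv3⟩ := hv
        simp only [crystalVerts, Finset.coe_singleton, Set.mem_union, Set.mem_singleton_iff,
          Set.mem_iUnion, Finset.mem_coe, Finset.mem_singleton, exists_prop] at hu
        rcases hu with (rfl | ⟨_, _, hu⟩) | ⟨_, _, hu⟩
        · exact hwanti v hvZ hv1 hv2 hv3
        · exact (hT1p _ hu).1.2.2.2.2.2.2.2.2.2 v hvZ hv1 hv2 hv3
        · exact (hT2p _ hu).1.2.2.2.2.2.2.2.2.2 v hvZ hv1 hv2 hv3
    · rcases Nat.lt_or_ge C1.card g with hlt | hge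
      · have hD1card : f ≤ D1.card := by omega
        obtain ⟨C, hCsub, hCcard⟩ := Finset.exists_subset_card_eq hD1card
        refine ⟨z1, C, Or.inl rfl, ?_, hCcard, ?_⟩
        · intro x hx
          rw [Finset.mem_coe] at hx
          have hxD := hCsub hx
          rw [hD1, Finset.mem_filter] at hxD
          exact (hGd1p x hxD.1).1
        · intro x hx
          have hxD := hCsub hx
          rw [hD1, Finset.mem_filter] at hxD
          obtain ⟨hxGd, hxadj2⟩ := hxD
          obtain ⟨_, hxZ1, hxZ2, hx1, hx2, _, hxnZ, ha1, haw, hanti⟩ := hGd1p x hxGd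
          exact ⟨⟨hxZ1, hx1, hx2, ha1, hxadj2.symm, hanti, Or.inr hxnZ⟩, haw⟩
      · have hlt2 : C2.card < g := by
          by_contra hc
          exact hgg ⟨hge, by omega⟩
        have hD2card : f ≤ D2.card := by omega
        obtain ⟨C, hCsub, hCcard⟩ := Finset.exists_subset_card_eq hD2card
        refine ⟨z2, C, Or.inr rfl, ?_, hCcard, ?_⟩
        · intro x hx
          rw [Finset.mem_coe] at hx
          have hxD := hCsub hx
          rw [hD2, Finset.mem_filter] at hxD
          exact (hGd2p x hxD.1).1
        · intro x hx
          have hxD := hCsub hx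
          rw [hD2, Finset.mem_filter] at hxD
          obtain ⟨hxGd, hxadj1⟩ := hxD
          obtain ⟨_, hxZ1, hxZ2, hx1, hx2, _, hxnZ, ha2, haw, hanti⟩ := hGd2p x hxGd
          exact ⟨⟨hxZ1, hx1, hx2, hxadj1.symm, ha2, hanti, Or.inr hxnZ⟩, haw⟩
  -- step function via choice
  have hstep : ∀ (i : ℕ) (w : V), ∃ (aw : V) (cw : Fin f → V), Good i w → i < f →
      ((aw = z1 ∨ aw = z2) ∧ Function.Injective cw ∧
       ∀ j, cw j ∈ Γ (i + 1) s(aw, w) ∧ Good (i + 1) (cw j) ∧ G.Adj w (cw j)) := by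
    intro i w
    by_cases hc : Good i w ∧ i < f
    · obtain ⟨a, C, ha, hCsub, hCcard, hC⟩ := hkey i hc.2 w hc.1
      have e := (C.equivFinOfCardEq hCcard).symm
      refine ⟨a, fun j => ↑(e j), fun _ _ => ⟨ha, ?_, ?_⟩⟩
      · exact fun j j' hjj => e.injective (Subtype.coe_injective hjj)
      · intro j
        exact ⟨hCsub (e j).2, (hC _ (e j).2).1, (hC _ (e j).2).2⟩
    · exact ⟨z, fun _ => z, fun hg' hi' => absurd ⟨hg', hi'⟩ hc⟩
  choose A cf hA using hstep
  set φl : List (Fin f) → V := philAux z cf with hφl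
  have hcons : ∀ (a : Fin f) (m : List (Fin f)), φl (a :: m) = cf m.length (φl m) a :=
    fun _ _ => rfl
  have hGz : Good 0 z := by
    refine ⟨hzZ0, h1z.symm, h2z.symm, hadj1z, hadj2z, ?_, Or.inl rfl⟩
    intro y hyZ hy1 hy2 hy3 hadj
    rcases (hNz y hyZ).mp hadj with rfl | rfl
    · exact hy1 rfl
    · exact hy2 rfl
  have hGoodl : ∀ l : List (Fin f), l.length ≤ f → Good l.length (φl l) := by
    intro l
    induction l with
    | nil => intro _; exact hGz
    | cons a m ih =>
      intro hlen
      have hmf : m.length < f := by simpa using hlen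
      have hGm := ih hmf.le
      have := (hA m.length (φl m) hGm hmf).2.2 a
      rw [hcons]
      exact this.2.1
  have hmem : ∀ (a : Fin f) (m : List (Fin f)), m.length < f →
      φl (a :: m) ∈ Γ (m.length + 1) s(A m.length (φl m), φl m) := by
    intro a m hmf
    have hGm := hGoodl m hmf.le
    have := (hA m.length (φl m) hGm hmf).2.2 a
    rw [hcons]
    exact this.1
  have hstrat : ∀ (a : Fin f) (m : List (Fin f)), m.length < f →
      φl (a :: m) ∈ Zs (m.length + 1) ∧ φl (a :: m) ∉ Zs m.length := by
    intro a m hmf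
    have hGm := hGoodl m hmf.le
    have hero := hΓm m.length hmf (A m.length (φl m)) (φl m) ?_ ?_ hGm.1
    · have := hero.2.2.1 (hmem a m hmf)
      exact ⟨this.1, this.2⟩
    · rcases (hA m.length (φl m) hGm hmf).1 with ha | ha <;> rw [ha]
      · exact hGm.2.2.2.1
      · exact hGm.2.2.2.2.1
    · rcases (hA m.length (φl m) hGm hmf).1 with ha | ha <;> rw [ha]
      · exact hmono 0 m.length (Nat.zero_le _) hmf.le hz1Z0
      · exact hmono 0 m.length (Nat.zero_le _) hmf.le hz2Z0
  have hinj : ∀ l l' : List (Fin f), l.length ≤ f → l'.length ≤ f → φl l = φl l' → l = l' := by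
    have haux : ∀ (a' : Fin f) (m' : List (Fin f)), m'.length < f → φl [] ≠ φl (a' :: m') := by
      intro a' m' hlen heq
      have h2 := hstrat a' m' hlen
      apply h2.2
      have hz' : φl (a' :: m') ∈ Zs 0 := by rw [← heq]; exact hzZ0
      exact hmono 0 m'.length (Nat.zero_le _) hlen.le hz'
    intro l
    induction l with
    | nil =>
      intro l' _ hl' heq
      cases l' with
      | nil => rfl
      | cons a' m' => exact absurd heq (haux a' m' (by simpa using hl'))
    | cons a m ih =>
      intro l' hl hl' heq
      cases l' with
      | nil => exact ((haux a m (by simpa using hl)) heq.symm).elim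
      | cons a' m' =>
        have hmf : m.length < f := by simpa using hl
        have hm'f : m'.length < f := by simpa using hl'
        rcases lt_trichotomy m.length m'.length with hlt | heqlen | hgt
        · exfalso
          apply (hstrat a' m' hm'f).2
          have h1 : φl (a' :: m') ∈ Zs (m.length + 1) := by
            rw [← heq]; exact (hstrat a m hmf).1
          exact hmono (m.length + 1) m'.length (by omega) hm'f.le h1
        · by_cases hww : φl m = φl m'
          · have hmm : m = m' := ih m' hmf.le hm'f.le hww
            subst hmm
            have hinjc := (hA m.length (φl m) (hGoodl m hmf.le) hmf).2.1
            rw [hcons a m, hcons a' m] at heq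
            rw [hinjc heq]
          · exfalso
            have hGm := hGoodl m hmf.le
            have hGm'0 := hGoodl m' hm'f.le
            have hGm' : Good m.length (φl m') := by rw [heqlen]; exact hGm'0
            have hAm := (hA m.length (φl m) hGm hmf).1
            have hAm' := (hA m.length (φl m') hGm' hmf).1
            have hadjm : G.Adj (A m.length (φl m)) (φl m) := by
              rcases hAm with ha | ha <;> rw [ha]
              exacts [hGm.2.2.2.1, hGm.2.2.2.2.1]
            have hadjm' : G.Adj (A m.length (φl m')) (φl m') := by
              rcases hAm' with ha | ha <;> rw [ha]
              exacts [hGm'.2.2.2.1, hGm'.2.2.2.2.1]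
            have hAmem : A m.length (φl m) ∈ Zs m.length := by
              rcases hAm with ha | ha <;> rw [ha]
              exacts [hmono 0 m.length (Nat.zero_le _) hmf.le hz1Z0,
                hmono 0 m.length (Nat.zero_le _) hmf.le hz2Z0]
            have hAmem' : A m.length (φl m') ∈ Zs m.length := by
              rcases hAm' with ha | ha <;> rw [ha]
              exacts [hmono 0 m.length (Nat.zero_le _) hmf.le hz1Z0,
                hmono 0 m.length (Nat.zero_le _) hmf.le hz2Z0]
            have hwmem : φl m ∈ Zs m.length := hGm.1
            have hwmem' : φl m' ∈ Zs m.length := hGm'.1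
            have hneq : s(A m.length (φl m), φl m) ≠ s(A m.length (φl m'), φl m') := by
              intro hcontra
              rw [Sym2.eq_iff] at hcontra
              rcases hcontra with ⟨h1', h2'⟩ | ⟨h1', h2'⟩
              · exact hww h2'
              · rcases hAm with ha | ha <;> rw [ha] at h1'
                · exact hGm'.2.1 h1'.symm
                · exact hGm'.2.2.1 h1'.symm
            have hdisj := hΓdisj m.length hmf (A m.length (φl m)) (φl m)
              (A m.length (φl m')) (φl m') hadjm hAmem hwmem hadjm' hAmem' hwmem' hneq
            have hx1 : φl (a :: m) ∈ Γ (m.length + 1) s(A m.length (φl m), φl m) :=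
              hmem a m hmf
            have hx2 : φl (a :: m) ∈ Γ (m.length + 1) s(A m.length (φl m'), φl m') := by
              have h0 := hmem a' m' hm'f
              rw [← heqlen] at h0
              rw [heq]
              exact h0
            have : φl (a :: m) ∈ (∅ : Set V) := by
              rw [← hdisj]; exact ⟨hx1, hx2⟩
            exact this
        · exfalso
          apply (hstrat a m hmf).2
          have h1 : φl (a :: m) ∈ Zs (m'.length + 1) := by
            rw [heq]; exact (hstrat a' m' hm'f).1
          exact hmono (m'.length + 1) m.length (by omega) hmf.le h1
  -- build the homomorphism
  set Φ : Option (Option (TdrVert f f)) → V :=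
    fun o => Option.elim o z1 (fun o' => Option.elim o' z2 (fun p => φl p.1)) with hΦ
  have hΦz1 : ∀ (o : Option (TdrVert f f)), G.Adj z1 (Option.elim o z2 (fun p => φl p.1)) := by
    intro o
    rcases o with _ | p
    · exact hadj12
    · exact (hGoodl p.1 p.2).2.2.2.1
  have hΦz2 : ∀ p : TdrVert f f, G.Adj z2 (φl p.1) := fun p => (hGoodl p.1 p.2).2.2.2.2.1
  have hΦtree : ∀ p q : TdrVert f f, (Tdr f f).Adj p q → G.Adj (φl p.1) (φl q.1) := by
    intro p q hpq
    rw [Tdr, SimpleGraph.fromRel_adj] at hpq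
    obtain ⟨hne, h | h⟩ := hpq <;> obtain ⟨a, ha⟩ := h
    · have hlen : p.1.length < f := by
        have := q.2; rw [ha] at this; simpa using this
      have hgg := ((hA p.1.length (φl p.1) (hGoodl p.1 hlen.le) hlen).2.2 a).2.2
      have hq : φl q.1 = cf p.1.length (φl p.1) a := by rw [ha, hcons]
      rw [hq]
      exact hgg
    · have hlen : q.1.length < f := by
        have := p.2; rw [ha] at this; simpa using this
      have hgg := ((hA q.1.length (φl q.1) (hGoodl q.1 hlen.le) hlen).2.2 a).2.2
      have hp' : φl p.1 = cf q.1.length (φl q.1) a := by rw [ha, hcons]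
      rw [hp']
      exact hgg.symm
  refine ⟨⟨Φ, ?_⟩, ?_⟩
  · -- map_rel
    intro u v huv
    rw [cone, SimpleGraph.fromRel_adj] at huv
    have hinner : ∀ a b : Option (TdrVert f f), (cone (Tdr f f)).Adj a b →
        G.Adj (Option.elim a z2 (fun p => φl p.1)) (Option.elim b z2 (fun p => φl p.1)) := by
      intro a b hab
      rw [cone, SimpleGraph.fromRel_adj] at hab
      obtain ⟨hne, hx | hx⟩ := hab
      · rcases hx with rfl | ⟨p, q, rfl, rfl, hpq⟩
        · rcases b with _ | q
          · exact absurd rfl hne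
          · exact hΦz2 q
        · exact hΦtree p q hpq
      · rcases hx with rfl | ⟨p, q, rfl, rfl, hpq⟩
        · rcases a with _ | p
          · exact absurd rfl hne
          · exact (hΦz2 p).symm
        · exact (hΦtree p q hpq).symm
    obtain ⟨hne, hx | hx⟩ := huv
    · rcases hx with rfl | ⟨a, b, rfl, rfl, hab⟩
      · rcases v with _ | o'
        · exact absurd rfl hne
        · exact hΦz1 o'
      · exact hinner a b hab
    · rcases hx with rfl | ⟨a, b, rfl, rfl, hab⟩
      · rcases u with _ | o'
        · exact absurd rfl hne
        · exact (hΦz1 o').symm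
      · exact (hinner a b hab).symm
  · -- injectivity
    intro o o' heq
    have hnz1 : ∀ p : TdrVert f f, φl p.1 ≠ z1 := fun p => (hGoodl p.1 p.2).2.1
    have hnz2 : ∀ p : TdrVert f f, φl p.1 ≠ z2 := fun p => (hGoodl p.1 p.2).2.2.1
    rcases o with _ | (_ | p) <;> rcases o' with _ | (_ | q) <;>
      simp only [hΦ, Option.elim] at heq
    · rfl
    · exact absurd heq h12
    · exact absurd heq.symm (hnz1 q)
    · exact absurd heq.symm h12
    · rfl
    · exact absurd heq.symm (hnz2 q)
    · exact absurd heq (hnz1 p)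
    · exact absurd heq (hnz2 p)
    · have : p = q := Subtype.ext (hinj p.1 q.1 p.2 q.2 heq)
      rw [this]
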